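/- (Kernel invariance under dual pivot) Let G be a symmetric V×V matrix over F2 and X ⊆ V with det((G+I)[X]) = 1. Define the dual pivot G ∗̄ X = ((G+I)*X) + I. Then ker(G ∗̄ X) = ker(G). -/

import Mathlib

open Matrix

variable {V : Type*} [Fintype V] [DecidableEq V] {K : Type*} [Field K]

/-- Principal submatrix of `A` on index set `X`. -/
def psub (A : Matrix V V K) (X : Finset V) :
    Matrix {v // v ∈ X} {v // v ∈ X} K :=
  A.submatrix Subtype.val Subtype.val

/-- Principal pivot transform of `A` on index set `X`. -/
noncomputable def pivot (A : Matrix V V K) (X : Finset V) : Matrix V V K :=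
  let P : Matrix {v // v ∈ X} {v // v ∈ X} K := A.submatrix Subtype.val Subtype.val
  let Q : Matrix {v // v ∈ X} {v // v ∉ X} K := A.submatrix Subtype.val Subtype.val
  let R : Matrix {v // v ∉ X} {v // v ∈ X} K := A.submatrix Subtype.val Subtype.val
  let S : Matrix {v // v ∉ X} {v // v ∉ X} K := A.submatrix Subtype.val Subtype.val
  (Matrix.fromBlocks P⁻¹ (-(P⁻¹ * Q)) (R * P⁻¹) (S - R * P⁻¹ * Q)).submatrix
    (Equiv.sumCompl (· ∈ X)).symm (Equiv.sumCompl (· ∈ X)).symm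

/-- Dual pivot of `G` on `X`: pivot conjugated by adding the identity. -/
noncomputable def dualPivot (G : Matrix V V (ZMod 2)) (X : Finset V) : Matrix V V (ZMod 2) :=
  pivot (G + 1) X + 1

lemma sum_elim_eq_iff {n m α : Type*} (a c : n → α) (b d : m → α) :
    Sum.elim a b = Sum.elim c d ↔ a = c ∧ b = d := by
  constructor
  · intro h
    exact ⟨funext fun i => congrFun h (.inl i), funext fun i => congrFun h (.inr i)⟩
  · rintro ⟨rfl, rfl⟩; rfl

lemma pivot_fixed_iff {n m : Type*} [Fintype n] [Fintype m] [DecidableEq n]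
    (P : Matrix n n K) (Q : Matrix n m K) (R : Matrix m n K) (S : Matrix m m K)
    (hP : IsUnit P.det) (x : n → K) (y : m → K) :
    (Matrix.fromBlocks P⁻¹ (-(P⁻¹ * Q)) (R * P⁻¹) (S - R * P⁻¹ * Q)).mulVec (Sum.elim x y)
      = Sum.elim x y ↔
    (Matrix.fromBlocks P Q R S).mulVec (Sum.elim x y) = Sum.elim x y := by
  have hinv : P⁻¹ * P = 1 := Matrix.nonsing_inv_mul P hP
  have hinv' : P * P⁻¹ = 1 := Matrix.mul_nonsing_inv P hP
  rw [Matrix.fromBlocks_mulVec, Matrix.fromBlocks_mulVec, sum_elim_eq_iff, sum_elim_eq_iff]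
  simp only [Sum.elim_comp_inl, Sum.elim_comp_inr, Matrix.neg_mulVec, Matrix.sub_mulVec]
  constructor
  · rintro ⟨h1, h2⟩
    have e1 : P.mulVec x + Q.mulVec y = x := by
      have h := congrArg P.mulVec h1
      rw [Matrix.mulVec_add, Matrix.mulVec_neg, Matrix.mulVec_mulVec, Matrix.mulVec_mulVec,
        hinv', ← Matrix.mul_assoc, hinv', Matrix.one_mul, Matrix.one_mulVec] at h
      linear_combination -h
    refine ⟨e1, ?_⟩
    have key : R.mulVec (P⁻¹.mulVec x + -((P⁻¹ * Q).mulVec y)) + S.mulVec y = y := by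
      rw [Matrix.mulVec_add, Matrix.mulVec_neg, Matrix.mulVec_mulVec, Matrix.mulVec_mulVec,
        ← Matrix.mul_assoc]
      linear_combination h2
    rw [h1] at key
    exact key
  · rintro ⟨h1, h2⟩
    have e1 : P⁻¹.mulVec x + -((P⁻¹ * Q).mulVec y) = x := by
      have h := congrArg P⁻¹.mulVec h1
      rw [Matrix.mulVec_add, Matrix.mulVec_mulVec, Matrix.mulVec_mulVec, hinv,
        Matrix.one_mulVec] at h
      linear_combination -h
    refine ⟨e1, ?_⟩
    have key : R.mulVec (P⁻¹.mulVec x + -((P⁻¹ * Q).mulVec y)) + S.mulVec y = y := by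
      rw [e1]; exact h2
    rw [Matrix.mulVec_add, Matrix.mulVec_neg, Matrix.mulVec_mulVec, Matrix.mulVec_mulVec,
      ← Matrix.mul_assoc] at key
    linear_combination key

theorem stmt8 (G : Matrix V V (ZMod 2)) (hG : G.IsSymm) (X : Finset V)
    (hX : (psub (G + 1) X).det = 1) :
    {v : V → ZMod 2 | (dualPivot G X).mulVec v = 0} =
      {v : V → ZMod 2 | G.mulVec v = 0} := by
  classical
  have c2 : ∀ a b : ZMod 2, a + b = 0 ↔ a = b := by decide
  have key2 : ∀ a b : V → ZMod 2, a + b = 0 ↔ a = b := by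
    intro a b
    constructor
    · intro h; funext i; exact (c2 _ _).1 (congrFun h i)
    · rintro rfl; funext i; exact (c2 _ _).2 rfl
  ext v
  simp only [Set.mem_setOf_eq]
  set e : {x // x ∈ X} ⊕ {x // x ∉ X} ≃ V := Equiv.sumCompl (· ∈ X) with he
  set P : Matrix {v // v ∈ X} {v // v ∈ X} (ZMod 2) :=
    (G + 1).submatrix Subtype.val Subtype.val with hPdef
  set Q : Matrix {v // v ∈ X} {v // v ∉ X} (ZMod 2) :=
    (G + 1).submatrix Subtype.val Subtype.val with hQdef
  set R : Matrix {v // v ∉ X} {v // v ∈ X} (ZMod 2) :=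
    (G + 1).submatrix Subtype.val Subtype.val with hRdef
  set S : Matrix {v // v ∉ X} {v // v ∉ X} (ZMod 2) :=
    (G + 1).submatrix Subtype.val Subtype.val with hSdef
  have hP : IsUnit P.det := by
    have : P = psub (G + 1) X := rfl
    rw [this, hX]; exact isUnit_one
  set x : {v // v ∈ X} → ZMod 2 := fun s => v s with hx
  set y : {v // v ∉ X} → ZMod 2 := fun s => v s with hy
  have hve : v ∘ e = Sum.elim x y := by
    funext s; cases s <;> rfl
  have comp_iff : ∀ f : {x // x ∈ X} ⊕ {x // x ∉ X} → ZMod 2,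
      f ∘ e.symm = v ↔ f = v ∘ e := by
    intro f
    constructor
    · intro h; funext s; have := congrFun h (e s); simpa using this
    · rintro rfl; funext i; simp
  have lhs_iff : (dualPivot G X).mulVec v = 0 ↔ (pivot (G + 1) X).mulVec v = v := by
    rw [dualPivot, Matrix.add_mulVec, Matrix.one_mulVec, key2]
  have rhs_iff : G.mulVec v = 0 ↔ (G + 1).mulVec v = v := by
    rw [Matrix.add_mulVec, Matrix.one_mulVec, add_eq_right]
  rw [lhs_iff, rhs_iff]
  have hpiv : pivot (G + 1) X =
      (Matrix.fromBlocks P⁻¹ (-(P⁻¹ * Q)) (R * P⁻¹) (S - R * P⁻¹ * Q)).submatrix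
        e.symm e.symm := rfl
  have hA : (G + 1) = (Matrix.fromBlocks P Q R S).submatrix e.symm e.symm := by
    have h1 : Matrix.fromBlocks P Q R S = (G + 1).submatrix e e := by
      ext i j
      cases i <;> cases j <;> rfl
    rw [h1, Matrix.submatrix_submatrix]
    simp
  rw [hpiv, hA, Matrix.submatrix_mulVec_equiv, Matrix.submatrix_mulVec_equiv,
    Equiv.symm_symm, comp_iff, comp_iff, hve]
  exact pivot_fixed_iff P Q R S hP x y
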